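/- Let (λ_n)_{n≥1} ⊆ [0,1] and nonnegative real sequences (a_n), (b_n) satisfy a_{n+1} ≤ (1-λ_{n+1})·a_n + b_n for all n ≥ 1. Assume ∑ λ_n diverges with rate of divergence δ : ℕ* → ℕ* (i.e. ∑_{i=1}^{δ(n)} λ_i ≥ n for all n ≥ 1), ∑ b_n converges with Cauchy modulus γ : (0,∞) → ℕ* for its partial sums s_m := ∑_{i=1}^m b_i (i.e. s_{γ(ε)+n} - s_{γ(ε)} < ε for all ε > 0, n ≥ 1), and D ∈ ℕ* is an upper bound on (a_n). Then lim a_n = 0, and moreover for all ε ∈ (0,2) and all n ≥ δ(γ(ε/2) + 1 + ⌈ln(2D/ε)⌉), we have a_n < ε. -/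

import Mathlib

theorem quantitative_liu_lemma
    (lam a b : ℕ → ℝ)
    (hlam : ∀ n ≥ 1, lam n ∈ Set.Icc (0:ℝ) 1)
    (ha : ∀ n ≥ 1, 0 ≤ a n) (hb : ∀ n ≥ 1, 0 ≤ b n)
    (hrec : ∀ n ≥ 1, a (n + 1) ≤ (1 - lam (n + 1)) * a n + b n)
    (δ : ℕ → ℕ) (hδpos : ∀ n : ℕ, 1 ≤ n → 1 ≤ δ n)
    (hδ : ∀ n : ℕ, 1 ≤ n → (n : ℝ) ≤ ∑ i ∈ Finset.Icc 1 (δ n), lam i)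
    (γ : ℝ → ℕ) (hγpos : ∀ ε > (0:ℝ), 1 ≤ γ ε)
    (hγ : ∀ ε > (0:ℝ), ∀ n ≥ 1,
      (∑ i ∈ Finset.Icc 1 (γ ε + n), b i) - (∑ i ∈ Finset.Icc 1 (γ ε), b i) < ε)
    (D : ℕ) (hDpos : 1 ≤ D) (hD : ∀ n ≥ 1, a n ≤ (D : ℝ)) :
    Filter.Tendsto a Filter.atTop (nhds 0) ∧
    ∀ ε : ℝ, 0 < ε → ε < 2 →
      ∀ n : ℕ, δ (γ (ε / 2) + 1 + ⌈Real.log (2 * D / ε)⌉₊) ≤ n → a n < ε := by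
  have key : ∀ ε : ℝ, 0 < ε → ε < 2 →
      ∀ n : ℕ, δ (γ (ε / 2) + 1 + ⌈Real.log (2 * D / ε)⌉₊) ≤ n → a n < ε := by
    intro ε hε hε2 n hn
    have hε2' : (0:ℝ) < ε / 2 := by linarith
    set g := γ (ε / 2) with hg
    set N := g + 1 with hNdef
    set K := ⌈Real.log (2 * D / ε)⌉₊ with hKdef
    have hg1 : 1 ≤ g := hγpos _ hε2'
    have hD1 : (1:ℝ) ≤ D := by exact_mod_cast hDpos
    have hratio : 1 < 2 * D / ε := by
      rw [lt_div_iff₀ hε]; nlinarith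
    have hratio0 : (0:ℝ) < 2 * D / ε := by linarith
    have hK1 : 1 ≤ K := by
      have hlog : 0 < Real.log (2 * D / ε) := Real.log_pos hratio
      exact Nat.one_le_ceil_iff.mpr hlog
    -- sums of lam over Icc 1 m are at most m
    have hsum_le : ∀ m : ℕ, (∑ i ∈ Finset.Icc 1 m, lam i) ≤ m := by
      intro m
      calc (∑ i ∈ Finset.Icc 1 m, lam i) ≤ ∑ i ∈ Finset.Icc 1 m, (1:ℝ) := by
            apply Finset.sum_le_sum
            intro i hi
            exact (hlam i (Finset.mem_Icc.mp hi).1).2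
        _ = m := by simp [Nat.card_Icc]
    have hδge : N + K ≤ δ (N + K) := by
      have h1 : ((N + K : ℕ) : ℝ) ≤ ∑ i ∈ Finset.Icc 1 (δ (N + K)), lam i :=
        hδ _ (by omega)
      have h2 := hsum_le (δ (N + K))
      exact_mod_cast le_trans h1 h2
    have hnN : N + 1 ≤ n := by omega
    have hN1 : 1 ≤ N := by omega
    -- unrolled recursion
    have unroll : ∀ m : ℕ, a (N + m) ≤
        (∏ i ∈ Finset.Ioc N (N + m), (1 - lam i)) * a N
          + ∑ k ∈ Finset.Ico N (N + m), b k := by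
      intro m
      induction m with
      | zero => simp
      | succ m ih =>
        have hrec' := hrec (N + m) (by omega)
        have hlamm := hlam (N + m + 1) (by omega)
        have hprod_nonneg : 0 ≤ ∏ i ∈ Finset.Ioc N (N + m), (1 - lam i) := by
          apply Finset.prod_nonneg
          intro i hi
          have := (hlam i (by have := (Finset.mem_Ioc.mp hi).1; omega)).2
          linarith
        have hsum_nonneg : 0 ≤ ∑ k ∈ Finset.Ico N (N + m), b k := by
          apply Finset.sum_nonneg
          intro k hk
          exact hb k (by have := (Finset.mem_Ico.mp hk).1; omega)
        have haN : 0 ≤ a N := ha N hN1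
        have e1 : Finset.Ioc N ((N + m) + 1) = insert (N + m + 1) (Finset.Ioc N (N + m)) := by
          ext x; simp [Finset.mem_Ioc, Finset.mem_insert]; omega
        have e2 : Finset.Ico N ((N + m) + 1) = insert (N + m) (Finset.Ico N (N + m)) := by
          ext x; simp [Finset.mem_Ico, Finset.mem_insert] <;> omega
        have hnotmem1 : N + m + 1 ∉ Finset.Ioc N (N + m) := by simp [Finset.mem_Ioc]
        have hnotmem2 : N + m ∉ Finset.Ico N (N + m) := by simp
        rw [show N + (m+1) = (N + m) + 1 by omega]
        calc a (N + m + 1) ≤ (1 - lam (N + m + 1)) * a (N + m) + b (N + m) := hrec'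
          _ ≤ (1 - lam (N + m + 1)) *
              ((∏ i ∈ Finset.Ioc N (N + m), (1 - lam i)) * a N
                + ∑ k ∈ Finset.Ico N (N + m), b k) + b (N + m) := by
              apply add_le_add_left
              apply mul_le_mul_of_nonneg_left ih
              linarith [hlamm.2]
          _ ≤ (∏ i ∈ Finset.Ioc N ((N + m) + 1), (1 - lam i)) * a N
                + ∑ k ∈ Finset.Ico N ((N + m) + 1), b k := by
              rw [e1, e2, Finset.prod_insert hnotmem1, Finset.sum_insert hnotmem2]
              have h01 : 0 ≤ 1 - lam (N + m + 1) := by linarith [hlamm.2]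
              have h11 : 1 - lam (N + m + 1) ≤ 1 := by linarith [hlamm.1]
              nlinarith [mul_nonneg hprod_nonneg haN, mul_nonneg hlamm.1 hsum_nonneg]
    -- apply with m = n - N
    have hm : n = N + (n - N) := by omega
    have hun := unroll (n - N)
    rw [← hm] at hun
    -- bound the product
    have hIcc_Ioc : ∀ m : ℕ, Finset.Icc 1 m = Finset.Ioc 0 m := by
      intro m; ext x; simp [Finset.mem_Icc, Finset.mem_Ioc]; omega
    have hsum_lam_ge : (K : ℝ) ≤ ∑ i ∈ Finset.Ioc N n, lam i := by
      have hsplit : (∑ i ∈ Finset.Ioc 0 N, lam i) + ∑ i ∈ Finset.Ioc N n, lam i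
          = ∑ i ∈ Finset.Ioc 0 n, lam i :=
        Finset.sum_Ioc_consecutive _ (by omega) (by omega)
      have hsub : (∑ i ∈ Finset.Ioc 0 (δ (N + K)), lam i) ≤ ∑ i ∈ Finset.Ioc 0 n, lam i := by
        apply Finset.sum_le_sum_of_subset_of_nonneg
        · intro x hx; simp only [Finset.mem_Ioc] at *; omega
        · intro i hi _; exact (hlam i (by simp only [Finset.mem_Ioc] at hi; omega)).1
      have h1 : ((N + K : ℕ) : ℝ) ≤ ∑ i ∈ Finset.Ioc 0 (δ (N + K)), lam i := by
        rw [← hIcc_Ioc]; exact hδ _ (by omega)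
      have h2 : (∑ i ∈ Finset.Ioc 0 N, lam i) ≤ N := by rw [← hIcc_Ioc]; exact hsum_le N
      skip
      push_cast at h1 h2 ⊢
      linarith
    have hprod_le : (∏ i ∈ Finset.Ioc N n, (1 - lam i)) ≤ ε / (2 * D) := by
      have step1 : (∏ i ∈ Finset.Ioc N n, (1 - lam i))
          ≤ ∏ i ∈ Finset.Ioc N n, Real.exp (-lam i) := by
        apply Finset.prod_le_prod
        · intro i hi
          have := (hlam i (by have := (Finset.mem_Ioc.mp hi).1; omega)).2
          linarith
        · intro i hi
          have := Real.add_one_le_exp (-lam i)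
          linarith
      have step2 : (∏ i ∈ Finset.Ioc N n, Real.exp (-lam i))
          = Real.exp (-(∑ i ∈ Finset.Ioc N n, lam i)) := by
        rw [← Real.exp_sum, Finset.sum_neg_distrib]
      have step3 : Real.exp (-(∑ i ∈ Finset.Ioc N n, lam i)) ≤ Real.exp (-(K:ℝ)) :=
        Real.exp_le_exp.mpr (by linarith)
      have step4 : Real.exp (-(K:ℝ)) ≤ ε / (2 * D) := by
        have hlogK : Real.log (2 * D / ε) ≤ (K : ℝ) := Nat.le_ceil _
        have h5 : Real.exp (-(Real.log (2 * D / ε))) = ε / (2 * D) := by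
          rw [Real.exp_neg, Real.exp_log hratio0]
          field_simp
        calc Real.exp (-(K:ℝ)) ≤ Real.exp (-(Real.log (2 * D / ε))) :=
              Real.exp_le_exp.mpr (by linarith)
          _ = ε / (2 * D) := h5
      linarith [step1, step3, step4, step2 ▸ step1]
    -- bound the product * a N
    have hPa : (∏ i ∈ Finset.Ioc N n, (1 - lam i)) * a N ≤ ε / 2 := by
      have hprod_nonneg : 0 ≤ ∏ i ∈ Finset.Ioc N n, (1 - lam i) := by
        apply Finset.prod_nonneg
        intro i hi
        have := (hlam i (by have := (Finset.mem_Ioc.mp hi).1; omega)).2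
        linarith
      have haN : 0 ≤ a N := ha N hN1
      have haND : a N ≤ D := hD N hN1
      calc (∏ i ∈ Finset.Ioc N n, (1 - lam i)) * a N
          ≤ (ε / (2 * D)) * D := by
            apply mul_le_mul hprod_le haND haN (by positivity)
        _ = ε / 2 := by field_simp <;> ring
    -- bound the sum of b
    have hS : (∑ k ∈ Finset.Ico N n, b k) < ε / 2 := by
      have hm' : 1 ≤ n - 1 - g := by omega
      have heq : Finset.Ico N n = Finset.Ioc g (g + (n - 1 - g)) := by
        ext x; simp [Finset.mem_Ico, Finset.mem_Ioc]; omega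
      have hsplit : (∑ i ∈ Finset.Ioc 0 g, b i) + ∑ i ∈ Finset.Ioc g (g + (n - 1 - g)), b i
          = ∑ i ∈ Finset.Ioc 0 (g + (n - 1 - g)), b i :=
        Finset.sum_Ioc_consecutive _ (by omega) (by omega)
      have hγ' := hγ (ε / 2) hε2' (n - 1 - g) hm'
      rw [hIcc_Ioc, hIcc_Ioc] at hγ'
      rw [heq]
      linarith
    linarith
  refine ⟨?_, key⟩
  rw [Metric.tendsto_atTop]
  intro ε hε
  set ε' := min ε 1 with hε'def
  have hε'0 : 0 < ε' := lt_min hε one_pos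
  have hε'2 : ε' < 2 := lt_of_le_of_lt (min_le_right _ _) one_lt_two
  refine ⟨max (δ (γ (ε' / 2) + 1 + ⌈Real.log (2 * D / ε')⌉₊)) 1, fun n hn => ?_⟩
  have h1 : 1 ≤ n := le_trans (le_max_right _ _) hn
  have h2 := key ε' hε'0 hε'2 n (le_trans (le_max_left _ _) hn)
  rw [Real.dist_eq, sub_zero, abs_of_nonneg (ha n h1)]
  exact lt_of_lt_of_le h2 (min_le_left _ _)
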